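/- With G, H, a, b as in the dihedral setup (G/H ≅ D_n with n even, aⁿ, b², (ab)² ∈ H), a G-invariant one-dimensional representation φ: H → ℂˣ extends to a one-dimensional representation of G if and only if φ(aⁿ) = φ(a b a b⁻¹)^{n/2}. -/

import Mathlib

lemma r_one_zpow (n : ℕ) (k : ℤ) :
    (DihedralGroup.r 1 : DihedralGroup n) ^ k = DihedralGroup.r (k : ZMod n) := by
  induction k using Int.induction_on with
  | zero => rw [zpow_zero, Int.cast_zero]; rfl
  | succ i ih =>
      rw [zpow_add_one, ih, DihedralGroup.r_mul_r]
      push_cast; ring_nf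
  | pred i ih =>
      rw [zpow_sub_one, ih]
      have h1 : (DihedralGroup.r 1 : DihedralGroup n)⁻¹ = DihedralGroup.r (-1) :=
        inv_eq_of_mul_eq_one_right (by rw [DihedralGroup.r_mul_r, add_neg_cancel]; rfl)
      rw [h1, DihedralGroup.r_mul_r]
      push_cast; ring_nf

lemma units_sqrt (u : ℂˣ) : ∃ α : ℂˣ, α ^ 2 = u := by
  obtain ⟨z, hz⟩ := IsAlgClosed.exists_pow_nat_eq (k := ℂ) (u : ℂ) zero_lt_two
  have hz0 : z ≠ 0 := by
    intro h
    rw [h] at hz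
    exact u.ne_zero (by simpa using hz.symm)
  exact ⟨Units.mk0 z hz0, Units.ext (by simpa using hz)⟩

lemma extend_step {G : Type} [Group G] (H K : Subgroup G) (a : G) (d : ℕ)
    (hHK : H ≤ K) (haK : a ∈ K)
    (hcover : ∀ x ∈ K, ∃ h ∈ H, ∃ k : ℤ, x = h * a ^ k)
    (hord : ∀ k : ℤ, a ^ k ∈ H → (d : ℤ) ∣ k)
    (hstab : ∀ (k : ℤ), ∀ h ∈ H, a ^ k * h * a ^ (-k) ∈ H)
    (hA : a ^ (d : ℤ) ∈ H)
    (φ : H →* ℂˣ)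
    (hinv : ∀ (k : ℤ) (h : H), φ ⟨a ^ k * (h : G) * a ^ (-k), hstab k h h.2⟩ = φ h)
    (α : ℂˣ) (hα : α ^ (d : ℤ) = φ ⟨a ^ (d : ℤ), hA⟩) :
    ∃ ψ : K →* ℂˣ, (∀ (h : G) (hh : h ∈ H), ψ ⟨h, hHK hh⟩ = φ ⟨h, hh⟩) ∧ ψ ⟨a, haK⟩ = α := by
  classical
  have key : ∀ (h₁ h₂ : G) (hh₁ : h₁ ∈ H) (hh₂ : h₂ ∈ H) (k₁ k₂ : ℤ),
      h₁ * a ^ k₁ = h₂ * a ^ k₂ → φ ⟨h₁, hh₁⟩ * α ^ k₁ = φ ⟨h₂, hh₂⟩ * α ^ k₂ := by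
    intro h₁ h₂ hh₁ hh₂ k₁ k₂ heq
    have hpow : a ^ (k₂ - k₁) = h₂⁻¹ * h₁ := by
      have : h₂⁻¹ * (h₁ * a ^ k₁) = a ^ k₂ := by rw [heq]; group
      rw [zpow_sub, ← this]; group
    have hmemp : a ^ (k₂ - k₁) ∈ H := by rw [hpow]; exact mul_mem (inv_mem hh₂) hh₁
    obtain ⟨m, hm⟩ := hord _ hmemp
    have hval : φ ⟨a ^ (k₂ - k₁), hmemp⟩ = α ^ (k₂ - k₁) := by
      have e2 : (⟨a ^ (k₂ - k₁), hmemp⟩ : H) = (⟨a ^ (d : ℤ), hA⟩ : H) ^ m :=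
        Subtype.ext (by
          rw [SubgroupClass.coe_zpow]
          rw [← zpow_mul, ← hm])
      rw [e2, map_zpow, ← hα, ← zpow_mul, ← hm]
    have h1eq : φ ⟨h₁, hh₁⟩ = φ ⟨h₂, hh₂⟩ * α ^ (k₂ - k₁) := by
      have e3 : (⟨h₁, hh₁⟩ : H) = ⟨h₂, hh₂⟩ * ⟨a ^ (k₂ - k₁), hmemp⟩ :=
        Subtype.ext (by rw [Subgroup.coe_mul]; simp only [hpow]; group)
      rw [e3, map_mul, hval]
    rw [h1eq, mul_assoc, ← zpow_add]
    congr 1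
    ring_nf
  let dec : ∀ x : K, ∃ h ∈ H, ∃ k : ℤ, (x : G) = h * a ^ k := fun x => hcover x x.2
  let f : K → ℂˣ := fun x =>
    φ ⟨(dec x).choose, (dec x).choose_spec.1⟩ * α ^ (dec x).choose_spec.2.choose
  have fspec : ∀ (x : K) (h : G) (hh : h ∈ H) (k : ℤ), (x : G) = h * a ^ k →
      f x = φ ⟨h, hh⟩ * α ^ k := by
    intro x h hh k hx
    exact key _ _ _ _ _ _ (((dec x).choose_spec.2.choose_spec).symm.trans hx)
  have hmul : ∀ x y : K, f (x * y) = f x * f y := by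
    intro x y
    obtain ⟨h₁, hh₁, k₁, hx⟩ := dec x
    obtain ⟨h₂, hh₂, k₂, hy⟩ := dec y
    have hconj : a ^ k₁ * h₂ * a ^ (-k₁) ∈ H := hstab k₁ h₂ hh₂
    have hxy : ((x * y : K) : G) = (h₁ * (a ^ k₁ * h₂ * a ^ (-k₁))) * a ^ (k₁ + k₂) := by
      push_cast
      rw [hx, hy, zpow_add]
      group
    rw [fspec _ _ (mul_mem hh₁ hconj) _ hxy, fspec _ _ hh₁ _ hx, fspec _ _ hh₂ _ hy]
    have e4 : (⟨h₁ * (a ^ k₁ * h₂ * a ^ (-k₁)), mul_mem hh₁ hconj⟩ : H)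
        = ⟨h₁, hh₁⟩ * ⟨a ^ k₁ * h₂ * a ^ (-k₁), hconj⟩ := rfl
    rw [e4, map_mul, hinv k₁ ⟨h₂, hh₂⟩, zpow_add]
    exact mul_mul_mul_comm _ _ _ _
  refine ⟨MonoidHom.mk' f hmul, ?_, ?_⟩
  · intro h hh
    have : ((⟨h, hHK hh⟩ : K) : G) = h * a ^ (0 : ℤ) := by simp
    rw [show (MonoidHom.mk' f hmul) ⟨h, hHK hh⟩ = f ⟨h, hHK hh⟩ from rfl,
      fspec _ _ hh _ this]
    simp
  · have : ((⟨a, haK⟩ : K) : G) = 1 * a ^ (1 : ℤ) := by simp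
    rw [show (MonoidHom.mk' f hmul) ⟨a, haK⟩ = f ⟨a, haK⟩ from rfl,
      fspec _ _ (one_mem H) _ this]
    rw [show (⟨1, one_mem H⟩ : H) = 1 from rfl, map_one, one_mul, zpow_one]

theorem dihedral_extension_iff {G : Type} [Group G] [Finite G]
    (H : Subgroup G) [hN : H.Normal] (n : ℕ) (hn : 0 < n) (a b : G)
    (hev : Even n) (hgen : Subgroup.closure ((H : Set G) ∪ {a, b}) = ⊤)
    (ha : a ^ n ∈ H) (hb : b ^ 2 ∈ H) (hab2 : (a * b) ^ 2 ∈ H)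
    (hmem : a * b * a * b⁻¹ ∈ H)
    (hdih : ∃ e : (G ⧸ H) ≃* DihedralGroup n,
      e ((a : G ⧸ H)) = DihedralGroup.r 1 ∧ e ((b : G ⧸ H)) = DihedralGroup.sr 0)
    (φ : H →* ℂˣ)
    (hinv : ∀ (g : G) (h : H),
      φ ⟨g⁻¹ * (h : G) * g, by simpa using hN.conj_mem h h.2 g⁻¹⟩ = φ h) :
    (∃ ψ : G →* ℂˣ, ∀ h : H, ψ (h : G) = φ h) ↔
      φ ⟨a ^ n, ha⟩ = (φ ⟨a * b * a * b⁻¹, hmem⟩) ^ (n / 2) := by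
  classical
  constructor
  · rintro ⟨ψ, hψ⟩
    have h1 : φ ⟨a ^ n, ha⟩ = ψ a ^ n := by
      rw [← hψ ⟨a ^ n, ha⟩]; exact map_pow ψ a n
    have h2 : φ ⟨a * b * a * b⁻¹, hmem⟩ = ψ a ^ 2 := by
      rw [← hψ ⟨a * b * a * b⁻¹, hmem⟩]
      show ψ (a * b * a * b⁻¹) = ψ a ^ 2
      rw [map_mul, map_mul, map_mul, map_inv, pow_two,
        mul_right_comm (ψ a) (ψ b) (ψ a), mul_inv_cancel_right]
    rw [h1, h2, ← pow_mul]
    congr 1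
    obtain ⟨r, hr⟩ := hev
    omega
  · intro hcond
    obtain ⟨e, hea, heb⟩ := hdih
    haveI : NeZero n := ⟨hn.ne'⟩
    set c := a * b * a * b⁻¹ with hc
    -- the composite map to the dihedral group
    set E : G →* DihedralGroup n := e.toMonoidHom.comp (QuotientGroup.mk' H) with hE
    have hEH : ∀ h ∈ H, E h = 1 := by
      intro h hh
      show e ((h : G ⧸ H)) = 1
      rw [(QuotientGroup.eq_one_iff h).mpr hh, map_one]
    have hEa : E a = DihedralGroup.r 1 := hea
    have hEb : E b = DihedralGroup.sr 0 := heb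
    -- the subgroup H₁ generated by H and a
    set H₁ : Subgroup G := Subgroup.closure ((H : Set G) ∪ {a}) with hH₁
    have hHK : H ≤ H₁ := fun x hx => Subgroup.subset_closure (Or.inl hx)
    have haH₁ : a ∈ H₁ := Subgroup.subset_closure (Or.inr rfl)
    have stab1 : ∀ (k : ℤ), ∀ h ∈ H, a ^ k * h * a ^ (-k) ∈ H := by
      intro k h hh
      simpa [zpow_neg] using hN.conj_mem h hh (a ^ k)
    have cover1 : ∀ x ∈ H₁, ∃ h ∈ H, ∃ k : ℤ, x = h * a ^ k := by
      intro x hx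
      rw [hH₁] at hx
      induction hx using Subgroup.closure_induction with
      | mem g hg =>
          rcases hg with hg | hg
          · exact ⟨g, hg, 0, by simp⟩
          · exact ⟨1, one_mem H, 1, by simp [Set.mem_singleton_iff.mp hg]⟩
      | one => exact ⟨1, one_mem H, 0, by simp⟩
      | mul x y hx' hy' ihx ihy =>
          obtain ⟨h₁, hh₁, k₁, e₁⟩ := ihx
          obtain ⟨h₂, hh₂, k₂, e₂⟩ := ihy
          refine ⟨h₁ * (a ^ k₁ * h₂ * a ^ (-k₁)), mul_mem hh₁ (stab1 k₁ h₂ hh₂), k₁ + k₂, ?_⟩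
          rw [e₁, e₂, zpow_add]; group
      | inv x hx' ihx =>
          obtain ⟨h₁, hh₁, k₁, e₁⟩ := ihx
          refine ⟨a ^ (-k₁) * h₁⁻¹ * a ^ (- -k₁), stab1 (-k₁) h₁⁻¹ (inv_mem hh₁), -k₁, ?_⟩
          rw [e₁]; group
    have ord1 : ∀ k : ℤ, a ^ k ∈ H → (n : ℤ) ∣ k := by
      intro k hk
      have h1 : E (a ^ k) = 1 := hEH _ hk
      rw [map_zpow, hEa, r_one_zpow, DihedralGroup.one_def] at h1
      have h2 : ((k : ZMod n)) = 0 := by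
        simpa only [DihedralGroup.r.injEq] using h1
      exact (ZMod.intCast_zmod_eq_zero_iff_dvd k n).mp h2
    have hA1 : a ^ ((n : ℕ) : ℤ) ∈ H := by rw [zpow_natCast]; exact ha
    have hinv1 : ∀ (k : ℤ) (h : H),
        φ ⟨a ^ k * (h : G) * a ^ (-k), stab1 k h h.2⟩ = φ h := by
      intro k h
      have heq : (⟨a ^ k * (h : G) * a ^ (-k), stab1 k h h.2⟩ : H)
          = ⟨(a ^ (-k))⁻¹ * (h : G) * a ^ (-k), by
              simpa using hN.conj_mem h h.2 (a ^ (-k))⁻¹⟩ :=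
        Subtype.ext (by simp [zpow_neg])
      rw [heq]
      exact hinv (a ^ (-k)) h
    -- choose α with α² = φ(c)
    obtain ⟨α, hα2⟩ := units_sqrt (φ ⟨c, hmem⟩)
    have hα1 : α ^ ((n : ℕ) : ℤ) = φ ⟨a ^ ((n : ℕ) : ℤ), hA1⟩ := by
      have h3 : φ ⟨a ^ ((n : ℕ) : ℤ), hA1⟩ = φ ⟨a ^ n, ha⟩ := by
        congr 1; exact Subtype.ext (zpow_natCast a n)
      obtain ⟨r, hr⟩ := hev
      rw [h3, hcond, ← hα2, ← pow_mul, zpow_natCast]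
      congr 1
      omega
    obtain ⟨ψ₁, hψ₁H, hψ₁a⟩ :=
      extend_step H H₁ a n hHK haH₁ cover1 ord1 stab1 hA1 φ hinv1 α hα1
    -- conjugation of H₁ by b
    have sbA : b * a * b⁻¹ = a⁻¹ * c := by rw [hc]; group
    have sbA' : b⁻¹ * a * b = (b ^ 2)⁻¹ * (a⁻¹ * c) * b ^ 2 := by rw [hc]; group
    have sb : ∀ x ∈ H₁, b * x * b⁻¹ ∈ H₁ := by
      intro x hx
      rw [hH₁] at hx
      induction hx using Subgroup.closure_induction with
      | mem g hg =>
          rcases hg with hg | hg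
          · exact hHK (by simpa using hN.conj_mem g hg b)
          · rw [Set.mem_singleton_iff.mp hg, sbA]
            exact mul_mem (inv_mem haH₁) (hHK hmem)
      | one => simpa using one_mem H₁
      | mul x y hx' hy' ihx ihy =>
          rw [show b * (x * y) * b⁻¹ = (b * x * b⁻¹) * (b * y * b⁻¹) by group]
          exact mul_mem ihx ihy
      | inv x hx' ihx =>
          rw [show b * x⁻¹ * b⁻¹ = (b * x * b⁻¹)⁻¹ by group]
          exact inv_mem ihx
    have sb' : ∀ x ∈ H₁, b⁻¹ * x * b ∈ H₁ := by
      intro x hx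
      rw [hH₁] at hx
      induction hx using Subgroup.closure_induction with
      | mem g hg =>
          rcases hg with hg | hg
          · exact hHK (by simpa using hN.conj_mem g hg b⁻¹)
          · rw [Set.mem_singleton_iff.mp hg, sbA']
            exact mul_mem (mul_mem (inv_mem (hHK hb))
              (mul_mem (inv_mem haH₁) (hHK hmem))) (hHK hb)
      | one => simpa using one_mem H₁
      | mul x y hx' hy' ihx ihy =>
          rw [show b⁻¹ * (x * y) * b = (b⁻¹ * x * b) * (b⁻¹ * y * b) by group]
          exact mul_mem ihx ihy
      | inv x hx' ihx =>
          rw [show b⁻¹ * x⁻¹ * b = (b⁻¹ * x * b)⁻¹ by group]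
          exact inv_mem ihx
    have stab2 : ∀ (k : ℤ), ∀ x ∈ H₁, b ^ k * x * b ^ (-k) ∈ H₁ := by
      intro k
      induction k using Int.induction_on with
      | zero => intro x hx; simpa using hx
      | succ i ih =>
          intro x hx
          rw [show b ^ ((i : ℤ) + 1) * x * b ^ (-((i : ℤ) + 1))
              = b * (b ^ (i : ℤ) * x * b ^ (-(i : ℤ))) * b⁻¹ by group]
          exact sb _ (ih x hx)
      | pred i ih =>
          intro x hx
          rw [show b ^ (-(i : ℤ) - 1) * x * b ^ (-(-(i : ℤ) - 1))
              = b⁻¹ * (b ^ (-(i : ℤ)) * x * b ^ (-(-(i : ℤ)))) * b by group]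
          exact sb' _ (ih x hx)
    have cover2 : ∀ x ∈ (⊤ : Subgroup G), ∃ h ∈ H₁, ∃ k : ℤ, x = h * b ^ k := by
      intro x hxt
      clear hxt
      have hx : x ∈ Subgroup.closure ((H : Set G) ∪ {a, b}) := by rw [hgen]; trivial
      induction hx using Subgroup.closure_induction with
      | mem g hg =>
          rcases hg with hg | hg | hg
          · exact ⟨g, hHK hg, 0, by simp⟩
          · exact ⟨a, haH₁, 0, by simp [hg]⟩
          · exact ⟨1, one_mem H₁, 1, by simp [Set.mem_singleton_iff.mp hg]⟩
      | one => exact ⟨1, one_mem H₁, 0, by simp⟩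
      | mul x y hx' hy' ihx ihy =>
          obtain ⟨h₁, hh₁, k₁, e₁⟩ := ihx
          obtain ⟨h₂, hh₂, k₂, e₂⟩ := ihy
          refine ⟨h₁ * (b ^ k₁ * h₂ * b ^ (-k₁)), mul_mem hh₁ (stab2 k₁ h₂ hh₂), k₁ + k₂, ?_⟩
          rw [e₁, e₂, zpow_add]; group
      | inv x hx' ihx =>
          obtain ⟨h₁, hh₁, k₁, e₁⟩ := ihx
          refine ⟨b ^ (-k₁) * h₁⁻¹ * b ^ (- -k₁), stab2 (-k₁) h₁⁻¹ (inv_mem hh₁), -k₁, ?_⟩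
          rw [e₁]; group
    have hsr2 : (DihedralGroup.sr 0 : DihedralGroup n) ^ (2 : ℤ) = 1 := by
      rw [show (2 : ℤ) = ((2 : ℕ) : ℤ) from rfl, zpow_natCast, pow_two,
        DihedralGroup.sr_mul_sr]
      rw [sub_self]; rfl
    have ord2 : ∀ k : ℤ, b ^ k ∈ H₁ → ((2 : ℕ) : ℤ) ∣ k := by
      intro k hk
      by_contra hodd
      have hk2 : k = 2 * (k / 2) + 1 := by omega
      obtain ⟨h, hh, j, hbk⟩ := cover1 _ hk
      have hL : E (b ^ k) = DihedralGroup.sr 0 := by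
        rw [map_zpow, hEb, hk2, zpow_add, zpow_mul, hsr2, one_zpow, one_mul, zpow_one]
      have hR : E (b ^ k) = DihedralGroup.r (j : ZMod n) := by
        rw [hbk, map_mul, hEH h hh, one_mul, map_zpow, hEa, r_one_zpow]
      rw [hL] at hR
      cases hR
    have hA2 : b ^ ((2 : ℕ) : ℤ) ∈ H₁ := by rw [zpow_natCast]; exact hHK hb
    -- invariance of ψ₁ under conjugation by b
    have psi1_spec : ∀ (x : G) (hx : x ∈ H₁) (h : G) (hh : h ∈ H) (k : ℤ),
        x = h * a ^ k → ψ₁ ⟨x, hx⟩ = φ ⟨h, hh⟩ * α ^ k := by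
      intro x hx h hh k hxe
      have e5 : (⟨x, hx⟩ : H₁) = ⟨h, hHK hh⟩ * (⟨a, haH₁⟩ : H₁) ^ k :=
        Subtype.ext (by rw [Subgroup.coe_mul, SubgroupClass.coe_zpow]; exact hxe)
      rw [e5, map_mul, map_zpow, hψ₁H h hh, hψ₁a]
    have invb' : ∀ (x : G) (hx : x ∈ H₁),
        ψ₁ ⟨b⁻¹ * x * b, sb' x hx⟩ = ψ₁ ⟨x, hx⟩ := by
      intro x hx
      obtain ⟨h, hh, k, hxe⟩ := cover1 x hx
      -- value of ψ₁ on b⁻¹ab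
      have hel : b⁻¹ * a * b ∈ H₁ := sb' a haH₁
      have hval : ψ₁ ⟨b⁻¹ * a * b, hel⟩ = α := by
        have e6 : (⟨b⁻¹ * a * b, hel⟩ : H₁)
            = (⟨(b ^ 2 : G), hHK hb⟩ : H₁)⁻¹ * (⟨a, haH₁⟩ : H₁)⁻¹
              * ⟨c, hHK hmem⟩ * ⟨(b ^ 2 : G), hHK hb⟩ :=
          Subtype.ext (by push_cast; rw [sbA']; group)
        rw [e6, map_mul, map_mul, map_mul, map_inv, map_inv, hψ₁a,
          hψ₁H _ hb, hψ₁H _ hmem, ← hα2]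
        rw [mul_comm]
        group
      have hconjH : b⁻¹ * h * b ∈ H := by simpa using hN.conj_mem h hh b⁻¹
      have hvalh : ψ₁ ⟨b⁻¹ * h * b, hHK hconjH⟩ = φ ⟨h, hh⟩ := by
        rw [hψ₁H _ hconjH]
        exact hinv b ⟨h, hh⟩
      have hdecomp : b⁻¹ * x * b = (b⁻¹ * h * b) * (b⁻¹ * a * b) ^ k := by
        have hcz : (b⁻¹ * a * b) ^ k = b⁻¹ * a ^ k * b := by
          rw [show b⁻¹ * a * b = b⁻¹ * a * (b⁻¹)⁻¹ by rw [inv_inv], conj_zpow, inv_inv]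
        rw [hxe, hcz]; group
      have e7 : (⟨b⁻¹ * x * b, sb' x hx⟩ : H₁)
          = ⟨b⁻¹ * h * b, hHK hconjH⟩ * (⟨b⁻¹ * a * b, hel⟩ : H₁) ^ k :=
        Subtype.ext (by rw [Subgroup.coe_mul, SubgroupClass.coe_zpow]; exact hdecomp)
      rw [e7, map_mul, map_zpow, hvalh, hval, psi1_spec x hx h hh k hxe]
    have invb : ∀ (x : G) (hx : x ∈ H₁),
        ψ₁ ⟨b * x * b⁻¹, sb x hx⟩ = ψ₁ ⟨x, hx⟩ := by
      intro x hx
      have h8 := invb' (b * x * b⁻¹) (sb x hx)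
      have e8 : (⟨b⁻¹ * (b * x * b⁻¹) * b, sb' _ (sb x hx)⟩ : H₁) = ⟨x, hx⟩ :=
        Subtype.ext (by group)
      rw [e8] at h8
      exact h8.symm
    have hinv2 : ∀ (k : ℤ) (x : H₁),
        ψ₁ ⟨b ^ k * (x : G) * b ^ (-k), stab2 k x x.2⟩ = ψ₁ x := by
      intro k
      induction k using Int.induction_on with
      | zero =>
          intro x
          have : (⟨b ^ (0 : ℤ) * (x : G) * b ^ (-(0 : ℤ)), stab2 0 x x.2⟩ : H₁) = x :=
            Subtype.ext (by simp)
          rw [this]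
      | succ i ih =>
          intro x
          have e9 : (⟨b ^ ((i : ℤ) + 1) * (x : G) * b ^ (-((i : ℤ) + 1)),
              stab2 _ x x.2⟩ : H₁)
              = ⟨b * (b ^ (i : ℤ) * (x : G) * b ^ (-(i : ℤ))) * b⁻¹,
                  sb _ (stab2 _ x x.2)⟩ :=
            Subtype.ext (by group)
          rw [e9, invb _ (stab2 _ x x.2)]
          exact ih x
      | pred i ih =>
          intro x
          have e10 : (⟨b ^ (-(i : ℤ) - 1) * (x : G) * b ^ (-(-(i : ℤ) - 1)),
              stab2 _ x x.2⟩ : H₁)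
              = ⟨b⁻¹ * (b ^ (-(i : ℤ)) * (x : G) * b ^ (-(-(i : ℤ)))) * b,
                  sb' _ (stab2 _ x x.2)⟩ :=
            Subtype.ext (by group)
          rw [e10, invb' _ (stab2 _ x x.2)]
          exact ih x
    -- choose β with β² = ψ₁(b²)
    obtain ⟨β, hβ2⟩ := units_sqrt (ψ₁ ⟨b ^ ((2 : ℕ) : ℤ), hA2⟩)
    have hβ : β ^ ((2 : ℕ) : ℤ) = ψ₁ ⟨b ^ ((2 : ℕ) : ℤ), hA2⟩ := by
      rw [zpow_natCast]; exact hβ2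
    obtain ⟨ψ₂, hψ₂H, _⟩ :=
      extend_step H₁ ⊤ b 2 le_top (Subgroup.mem_top b) cover2 ord2 stab2 hA2 ψ₁ hinv2 β hβ
    refine ⟨ψ₂.comp Subgroup.topEquiv.symm.toMonoidHom, ?_⟩
    intro h
    have h11 : ψ₂ ⟨(h : G), Subgroup.mem_top _⟩ = ψ₁ ⟨(h : G), hHK h.2⟩ := hψ₂H _ (hHK h.2)
    have h12 : ψ₁ ⟨(h : G), hHK h.2⟩ = φ ⟨(h : G), h.2⟩ := hψ₁H _ h.2
    calc ψ₂.comp Subgroup.topEquiv.symm.toMonoidHom (h : G)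
        = ψ₂ ⟨(h : G), Subgroup.mem_top _⟩ := rfl
      _ = φ h := by rw [h11, h12]
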